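/- Let H : F^p_α → L^p_α be a compact operator. Then for every g ∈ F^p_α one has ‖C_z H C_{−z} g‖_{L^p_α} → 0 as |z| → ∞. -/

import Mathlib

open MeasureTheory Complex Filter Topology Bornology
open scoped ENNReal NNReal

noncomputable section

/-- `ℂ^n` with the Euclidean norm. -/
abbrev Cn (n : ℕ) := EuclideanSpace ℂ (Fin n)

instance (n : ℕ) : MeasurableSpace (Cn n) := borel _
instance (n : ℕ) : BorelSpace (Cn n) := ⟨rfl⟩

/-- The exponent `p` as an element of `ℝ≥0∞`. -/
abbrev pe (p : ℝ) : ℝ≥0∞ := ENNReal.ofReal p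

/-- The sesquilinear pairing `⟨w,z⟩ = ∑ w_j * conj (z_j)`. -/
def herm {n : ℕ} (w z : Cn n) : ℂ := ∑ j, w j * (starRingEnd ℂ) (z j)

/-- The Gaussian measure `dμ_β = (β/π)^n e^{-β|z|²} dv` on `ℂ^n`. -/
def gaussian (n : ℕ) (β : ℝ) : Measure (Cn n) :=
  volume.withDensity fun z => ENNReal.ofReal ((β / Real.pi) ^ n * Real.exp (-β * ‖z‖ ^ 2))

/-- The Fock space `F^p_α`: the (closed) subspace of `L^p` consisting of the
(a.e. equivalence classes of) entire functions. -/
def fockSubmodule (n : ℕ) (p : ℝ≥0∞) (μ : Measure (Cn n)) :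
    Submodule ℂ (Lp ℂ p μ) where
  carrier := {f | ∃ g : Cn n → ℂ, Differentiable ℂ g ∧ (f : Cn n → ℂ) =ᵐ[μ] g}
  add_mem' := by
    rintro f₁ f₂ ⟨g₁, hg₁, he₁⟩ ⟨g₂, hg₂, he₂⟩
    exact ⟨g₁ + g₂, hg₁.add hg₂, (Lp.coeFn_add f₁ f₂).trans (he₁.add he₂)⟩
  zero_mem' := ⟨0, differentiable_const 0, Lp.coeFn_zero ℂ p μ⟩
  smul_mem' := by
    rintro c f ⟨g, hg, he⟩
    exact ⟨c • g, hg.const_smul c, (Lp.coeFn_smul c f).trans (he.const_smul c)⟩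

/-- Defining property of the family of weighted shifts
`(C_z f)(w) = f(w-z) · e^{α⟨w,z⟩ - (α/2)|z|²}` on `L^p_α` over `ℂ^n`. -/
def IsFockShiftFamily (n : ℕ) (α : ℝ) (p : ℝ≥0∞) [Fact (1 ≤ p)] (μ : Measure (Cn n))
    (C : Cn n → (Lp ℂ p μ →L[ℂ] Lp ℂ p μ)) : Prop :=
  ∀ z : Cn n, ∀ f : Lp ℂ p μ,
    (C z f : Cn n → ℂ) =ᵐ[μ]
      fun w => f (w - z) * Complex.exp ((α : ℂ) * herm w z - (α : ℂ) / 2 * (‖z‖ : ℂ) ^ 2)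

/-- Defining properties of the projection `P_α` of `L^p_α` onto the Fock space `F^p_α`:
the integral formula `(P_α f)(z) = ∫ f(w) e^{α⟨z,w⟩} dμ_α(w)`, together with the fact that it is
a projection onto `F^p_α`. -/
def IsFockProjection (n : ℕ) (α : ℝ) (p : ℝ≥0∞) [Fact (1 ≤ p)] (μ : Measure (Cn n))
    (P : Lp ℂ p μ →L[ℂ] Lp ℂ p μ) : Prop :=
  (∀ f : Lp ℂ p μ, ∀ᵐ z ∂μ,
      (P f : Cn n → ℂ) z
        = ∫ w, (f : Cn n → ℂ) w * Complex.exp ((α : ℂ) * herm z w) ∂(gaussian n α))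
    ∧ (∀ f : Lp ℂ p μ, P f ∈ fockSubmodule n p μ)
    ∧ (∀ f ∈ fockSubmodule n p μ, P f = f)

/-- `M` is the operator of multiplication by the symbol `h` on `L^p`. -/
def IsMulOpBy {n : ℕ} {p : ℝ≥0∞} [Fact (1 ≤ p)] {μ : Measure (Cn n)}
    (h : Cn n → ℂ) (M : Lp ℂ p μ →L[ℂ] Lp ℂ p μ) : Prop :=
  ∀ g : Lp ℂ p μ, (M g : Cn n → ℂ) =ᵐ[μ] fun w => h w * g w

/-- `A` is a band operator with respect to the metric `d`: there is a band width `ω > 0` such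
that `M_f A M_g = 0` whenever `f, g ∈ L^∞` have essential supports of `d`-distance
greater than `ω`. -/
def IsBandOp {n : ℕ} {p : ℝ≥0∞} [Fact (1 ≤ p)] {μ : Measure (Cn n)} (d : Cn n → Cn n → ℝ)
    (A : Lp ℂ p μ →L[ℂ] Lp ℂ p μ) : Prop :=
  ∃ ω > (0 : ℝ), ∀ (f g : Cn n → ℂ) (S T : Set (Cn n)),
    Measurable f → Measurable g →
    (∃ R, ∀ w, ‖f w‖ ≤ R) → (∃ R, ∀ w, ‖g w‖ ≤ R) →
    (∀ᵐ w ∂μ, w ∉ S → f w = 0) → (∀ᵐ w ∂μ, w ∉ T → g w = 0) →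
    (∀ s ∈ S, ∀ t ∈ T, ω < d s t) →
    ∀ u v : Lp ℂ p μ, (v : Cn n → ℂ) =ᵐ[μ] (fun w => g w * u w) →
      (fun w => f w * (A v : Cn n → ℂ) w) =ᵐ[μ] 0

/-- `A` is band-dominated: it is a norm limit of band operators. -/
def IsBandDominated {n : ℕ} {p : ℝ≥0∞} [Fact (1 ≤ p)] {μ : Measure (Cn n)}
    (d : Cn n → Cn n → ℝ) (A : Lp ℂ p μ →L[ℂ] Lp ℂ p μ) : Prop :=
  A ∈ closure {B : Lp ℂ p μ →L[ℂ] Lp ℂ p μ | IsBandOp d B}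

/-! ### The unit ball / Bergman space setting -/

/-- The open unit ball `𝔹_n ⊆ ℂ^n`. -/
def unitBall (n : ℕ) : Set (Cn n) := Metric.ball 0 1

/-- The measure `dμ_α = c_α (1-|z|²)^α dv` on `𝔹_n`,
with `c_α = Γ(n+α+1)/(n! Γ(α+1))`. -/
def bergMeasure (n : ℕ) (α : ℝ) : Measure (Cn n) :=
  (volume.restrict (unitBall n)).withDensity fun z =>
    ENNReal.ofReal
      ((Real.Gamma (n + α + 1) / ((Nat.factorial n : ℝ) * Real.Gamma (α + 1)))
        * (1 - ‖z‖ ^ 2) ^ α)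

/-- The Möbius involution `φ_z` of `𝔹_n` interchanging `0` and `z`:
`φ_z(w) = (z - P_z w - s_z Q_z w)/(1 - ⟨w,z⟩)` where `P_z` is the orthogonal projection onto
`ℂ z`, `Q_z = I - P_z` and `s_z = √(1-|z|²)`. -/
def mobius {n : ℕ} (z w : Cn n) : Cn n :=
  (1 - herm w z)⁻¹ •
    ((z - (herm w z / herm z z) • z) -
      ((Real.sqrt (1 - ‖z‖ ^ 2) : ℝ) : ℂ) • (w - (herm w z / herm z z) • z))

/-- The Bergman metric `d(z,w) = (1/2) log((1+|φ_z(w)|)/(1-|φ_z(w)|))` on `𝔹_n`. -/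
def bergDist {n : ℕ} (z w : Cn n) : ℝ :=
  (1 / 2) * Real.log ((1 + ‖mobius z w‖) / (1 - ‖mobius z w‖))

/-- The filter of `z ∈ 𝔹_n` with `|z| → 1`, i.e. `z` tending to the boundary of the ball. -/
def ballBoundary (n : ℕ) : Filter (Cn n) :=
  Filter.comap (fun z => ‖z‖) (𝓝 1) ⊓ Filter.principal (unitBall n)

/-- The Bergman space `A^p_α`: the (closed) subspace of `L^p` consisting of the
(a.e. equivalence classes of) holomorphic functions on the ball. -/
def bergSubmodule (n : ℕ) (p : ℝ≥0∞) (μ : Measure (Cn n)) :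
    Submodule ℂ (Lp ℂ p μ) where
  carrier := {f | ∃ g : Cn n → ℂ, DifferentiableOn ℂ g (unitBall n) ∧ (f : Cn n → ℂ) =ᵐ[μ] g}
  add_mem' := by
    rintro f₁ f₂ ⟨g₁, hg₁, he₁⟩ ⟨g₂, hg₂, he₂⟩
    exact ⟨g₁ + g₂, hg₁.add hg₂, (Lp.coeFn_add f₁ f₂).trans (he₁.add he₂)⟩
  zero_mem' := ⟨0, differentiableOn_const 0, Lp.coeFn_zero ℂ p μ⟩
  smul_mem' := by
    rintro c f ⟨g, hg, he⟩
    exact ⟨c • g, hg.const_smul c, (Lp.coeFn_smul c f).trans (he.const_smul c)⟩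

/-- Defining property of the family of reflections
`(C_z f)(w) = f(φ_z(w)) (1-|z|²)^{(n+1+α)/p} / (1-⟨w,z⟩)^{2(n+1+α)/p}` on `L^p_α` over `𝔹_n`. -/
def IsBergReflFamily (n : ℕ) (α p : ℝ) [Fact (1 ≤ pe p)] (μ : Measure (Cn n))
    (C : Cn n → (Lp ℂ (pe p) μ →L[ℂ] Lp ℂ (pe p) μ)) : Prop :=
  ∀ z : Cn n, ∀ f : Lp ℂ (pe p) μ,
    (C z f : Cn n → ℂ) =ᵐ[μ] fun w =>
      f (mobius z w) * (((1 - ‖z‖ ^ 2) ^ ((n + 1 + α) / p) : ℝ) : ℂ) /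
        (1 - herm w z) ^ ((2 * (n + 1 + α) / p : ℝ) : ℂ)

/-- Defining properties of the Bergman projection `P_α` of `L^p_α` onto `A^p_α`:
the integral formula `(P_α f)(z) = ∫ f(w) (1-⟨z,w⟩)^{-(n+1+α)} dμ_α(w)`, together with the fact
that it is a projection onto `A^p_α`. -/
def IsBergProjection (n : ℕ) (α : ℝ) (p : ℝ≥0∞) [Fact (1 ≤ p)] (μ : Measure (Cn n))
    (P : Lp ℂ p μ →L[ℂ] Lp ℂ p μ) : Prop :=
  (∀ f : Lp ℂ p μ, ∀ᵐ z ∂μ,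
      (P f : Cn n → ℂ) z
        = ∫ w, (f : Cn n → ℂ) w * (1 - herm z w) ^ ((-(n + 1 + α) : ℝ) : ℂ) ∂(bergMeasure n α))
    ∧ (∀ f : Lp ℂ p μ, P f ∈ bergSubmodule n p μ)
    ∧ (∀ f ∈ bergSubmodule n p μ, P f = f)

/-! ### Auxiliary lemmas for `stmt0` -/

namespace Stmt0Aux

open MeasureTheory

variable {n : ℕ}

lemma gaussian_null_of_volume_null {β : ℝ} {A : Set (Cn n)} (hA : volume A = 0) :
    gaussian n β A = 0 :=
  MeasureTheory.withDensity_absolutelyContinuous _ _ hA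

lemma volume_null_of_gaussian_null {β : ℝ} (hβ : 0 < β) {A : Set (Cn n)}
    (hA : gaussian n β A = 0) : volume A = 0 := by
  classical
  set d : Cn n → ℝ≥0∞ := fun z => ENNReal.ofReal ((β / Real.pi) ^ n * Real.exp (-β * ‖z‖ ^ 2))
    with hd
  have hcont : Continuous fun z : Cn n => (β / Real.pi) ^ n * Real.exp (-β * ‖z‖ ^ 2) :=
    continuous_const.mul (Real.continuous_exp.comp (continuous_const.mul (continuous_norm.pow 2)))
  have hdm : Measurable d := ENNReal.measurable_ofReal.comp hcont.measurable
  have hsub : A ⊆ toMeasurable (gaussian n β) A := subset_toMeasurable _ _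
  have hA'm : MeasurableSet (toMeasurable (gaussian n β) A) := measurableSet_toMeasurable _ _
  have h0 : gaussian n β (toMeasurable (gaussian n β) A) = 0 := by rwa [measure_toMeasurable]
  have h0' : (∫⁻ x in toMeasurable (gaussian n β) A, d x ∂volume) = 0 := by
    rw [← withDensity_apply d hA'm]; exact h0
  rw [setLIntegral_eq_zero_iff hA'm hdm] at h0'
  have hpos : ∀ x : Cn n, d x ≠ 0 := by
    intro x
    simp only [hd, ne_eq, ENNReal.ofReal_eq_zero, not_le]
    exact mul_pos (pow_pos (div_pos hβ Real.pi_pos) n) (Real.exp_pos _)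
  have h1 := ae_iff.mp h0'
  have h2 : {a : Cn n | ¬ (a ∈ toMeasurable (gaussian n β) A → d a = 0)}
      = toMeasurable (gaussian n β) A := by
    ext a
    simp [hpos a]
  rw [h2] at h1
  exact measure_mono_null hsub h1

lemma ae_translate {β : ℝ} (hβ : 0 < β) {f h : Cn n → ℂ} (ζ : Cn n)
    (hfh : f =ᵐ[gaussian n β] h) :
    (fun w => f (w - ζ)) =ᵐ[gaussian n β] fun w => h (w - ζ) := by
  have hN : gaussian n β {x : Cn n | ¬ f x = h x} = 0 := ae_iff.mp hfh
  have hv : volume ((· + (-ζ)) ⁻¹' {x : Cn n | ¬ f x = h x}) = 0 := by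
    rw [measure_preimage_add_right]
    exact volume_null_of_gaussian_null hβ hN
  have hg2 : gaussian n β ((· + (-ζ)) ⁻¹' {x : Cn n | ¬ f x = h x}) = 0 :=
    gaussian_null_of_volume_null hv
  have hseteq : {w : Cn n | ¬ f (w - ζ) = h (w - ζ)}
      = (· + (-ζ)) ⁻¹' {x : Cn n | ¬ f x = h x} := by
    ext w
    simp [sub_eq_add_neg]
  rw [Filter.EventuallyEq, ae_iff]
  simpa only [hseteq] using hg2

lemma tail_small {p : ℝ} (hp : 0 < p) [Fact (1 ≤ pe p)] (μ : Measure (Cn n))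
    (f : Lp ℂ (pe p) μ) {τ : ℝ≥0∞} (hτ0 : τ ≠ 0) (hτt : τ ≠ ∞) :
    ∃ R : ℝ, 0 < R ∧
      eLpNorm ((Metric.ball (0 : Cn n) R)ᶜ.indicator ⇑f) (pe p) μ ≤ τ := by
  have hP0 : (pe p) ≠ 0 := by simp [pe, ENNReal.ofReal_eq_zero, not_le, hp]
  have hPt : (pe p) ≠ ∞ := ENNReal.ofReal_ne_top
  have hPr : (pe p).toReal = p := ENNReal.toReal_ofReal hp.le
  set s : ℕ → Set (Cn n) := fun k => (Metric.ball (0 : Cn n) (k : ℝ))ᶜ with hs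
  set ν : Measure (Cn n) := μ.withDensity fun w => (‖f w‖₊ : ℝ≥0∞) ^ p with hν
  have hint : (∫⁻ w, (‖f w‖₊ : ℝ≥0∞) ^ p ∂μ) ≠ ∞ := by
    intro hcon
    have h1 := Lp.eLpNorm_lt_top f
    rw [eLpNorm_eq_lintegral_rpow_enorm_toReal hP0 hPt, hPr] at h1
    simp only [enorm_eq_nnnorm] at h1
    rw [hcon,
      ENNReal.top_rpow_of_pos (by positivity)] at h1
    exact lt_irrefl _ h1
  have hνs : ∀ k, ν (s k) = ∫⁻ w in s k, (‖f w‖₊ : ℝ≥0∞) ^ p ∂μ := fun k =>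
    withDensity_apply _ measurableSet_ball.compl
  have hνfin : ν (s 0) ≠ ∞ := by
    rw [hνs]
    exact ne_top_of_le_ne_top hint (lintegral_mono' Measure.restrict_le_self le_rfl)
  have hanti : Antitone s := fun k l hkl =>
    Set.compl_subset_compl.mpr (Metric.ball_subset_ball (by exact_mod_cast hkl))
  have hiInter : ⋂ k, s k = ∅ := by
    ext w
    simp only [Set.mem_iInter, Set.mem_empty_iff_false, iff_false, not_forall]
    obtain ⟨k, hk⟩ := exists_nat_gt ‖w‖
    refine ⟨k, ?_⟩
    simp only [hs, Set.mem_compl_iff, not_not]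
    exact Metric.mem_ball.mpr (by rwa [dist_zero_right])
  have htend : Filter.Tendsto (fun k => ν (s k)) Filter.atTop (𝓝 0) := by
    have h := tendsto_measure_iInter_atTop
      (fun k => measurableSet_ball.compl.nullMeasurableSet) hanti ⟨0, hνfin⟩
    rw [hiInter, measure_empty] at h
    exact h
  have hτpow : 0 < τ ^ p := ENNReal.rpow_pos (pos_iff_ne_zero.mpr hτ0) hτt
  have hev : ∀ᶠ k : ℕ in Filter.atTop, ν (s k) < τ ^ p := htend.eventually (gt_mem_nhds hτpow)
  obtain ⟨k, hk1, hk2⟩ := (hev.and (Filter.eventually_ge_atTop 1)).exists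
  refine ⟨(k : ℝ), by exact_mod_cast Nat.cast_pos.mpr hk2, ?_⟩
  rw [eLpNorm_indicator_eq_eLpNorm_restrict measurableSet_ball.compl,
    eLpNorm_eq_lintegral_rpow_enorm_toReal hP0 hPt, hPr]
  calc (∫⁻ w, (‖f w‖₊ : ℝ≥0∞) ^ p ∂(μ.restrict ((Metric.ball (0 : Cn n) (k : ℝ))ᶜ))) ^ (1 / p)
      = (ν (s k)) ^ (1 / p) := by rw [hνs k]
    _ ≤ (τ ^ p) ^ (1 / p) := ENNReal.rpow_le_rpow hk1.le (by positivity)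
    _ = τ := by rw [one_div, ENNReal.rpow_rpow_inv hp.ne']

lemma lp_coeFn_sum {α : Type*} [MeasurableSpace α] {μ : Measure α} {P : ℝ≥0∞}
    (m : ℕ) (u : ℕ → Lp ℂ P μ) :
    ⇑(∑ j ∈ Finset.range m, u j) =ᵐ[μ] fun w => ∑ j ∈ Finset.range m, (u j : α → ℂ) w := by
  induction m with
  | zero =>
    simp only [Finset.range_zero, Finset.sum_empty]
    exact Lp.coeFn_zero ℂ P μ
  | succ k ih =>
    rw [Finset.sum_range_succ]
    refine (Lp.coeFn_add _ _).trans ?_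
    filter_upwards [ih] with w hw
    simp only [Pi.add_apply, Finset.sum_range_succ, hw]

lemma disj_sum {p : ℝ} (hp : 0 < p) {μ : Measure (Cn n)}
    (m : ℕ) (a : ℕ → Cn n → ℂ) (B : ℕ → Set (Cn n))
    (ham : ∀ j, AEStronglyMeasurable (a j) μ)
    (hsupp : ∀ j w, a j w ≠ 0 → w ∈ B j)
    (hdisj : ∀ i j, i ≠ j → ∀ w, w ∈ B i → w ∈ B j → False)
    {L : ℝ≥0∞} (hL : ∀ j, eLpNorm (a j) (pe p) μ ≤ L) :
    eLpNorm (fun w => ∑ j ∈ Finset.range m, a j w) (pe p) μ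
      ≤ (m : ℝ≥0∞) ^ ((1 : ℝ) / p) * L := by
  have hP0 : (pe p) ≠ 0 := by simp [pe, ENNReal.ofReal_eq_zero, not_le, hp]
  have hPt : (pe p) ≠ ∞ := ENNReal.ofReal_ne_top
  have hPr : (pe p).toReal = p := ENNReal.toReal_ofReal hp.le
  have hptw : ∀ w, ((‖∑ j ∈ Finset.range m, a j w‖₊ : ℝ≥0∞)) ^ p
      ≤ ∑ j ∈ Finset.range m, ((‖a j w‖₊ : ℝ≥0∞)) ^ p := by
    intro w
    by_cases hall : ∀ j ∈ Finset.range m, a j w = 0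
    · rw [Finset.sum_eq_zero hall]
      simp only [nnnorm_zero, ENNReal.coe_zero]
      rw [ENNReal.zero_rpow_of_pos hp]
      exact zero_le
    · push_neg at hall
      obtain ⟨j₀, hj₀m, hj₀⟩ := hall
      have hsum : ∑ j ∈ Finset.range m, a j w = a j₀ w :=
        Finset.sum_eq_single_of_mem j₀ hj₀m fun b hbm hbne => by
          by_contra hb
          exact hdisj b j₀ hbne w (hsupp b w hb) (hsupp j₀ w hj₀)
      rw [hsum]
      exact Finset.single_le_sum (f := fun j => ((‖a j w‖₊ : ℝ≥0∞)) ^ p)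
        (fun i _ => zero_le) hj₀m
  have hintle : (∫⁻ w, ((‖∑ j ∈ Finset.range m, a j w‖₊ : ℝ≥0∞)) ^ p ∂μ)
      ≤ ∑ j ∈ Finset.range m, ∫⁻ w, ((‖a j w‖₊ : ℝ≥0∞)) ^ p ∂μ := by
    calc (∫⁻ w, ((‖∑ j ∈ Finset.range m, a j w‖₊ : ℝ≥0∞)) ^ p ∂μ)
        ≤ ∫⁻ w, ∑ j ∈ Finset.range m, ((‖a j w‖₊ : ℝ≥0∞)) ^ p ∂μ := lintegral_mono hptw
      _ = ∑ j ∈ Finset.range m, ∫⁻ w, ((‖a j w‖₊ : ℝ≥0∞)) ^ p ∂μ :=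
          lintegral_finset_sum' _ fun j _ => ((ham j).enorm.pow_const p)
  have hjeq : ∀ j, (∫⁻ w, ((‖a j w‖₊ : ℝ≥0∞)) ^ p ∂μ) = (eLpNorm (a j) (pe p) μ) ^ p := by
    intro j
    rw [eLpNorm_eq_lintegral_rpow_enorm_toReal hP0 hPt, hPr, one_div, ENNReal.rpow_inv_rpow hp.ne']
    rfl
  have hsum_le : (∫⁻ w, ((‖∑ j ∈ Finset.range m, a j w‖₊ : ℝ≥0∞)) ^ p ∂μ)
      ≤ (m : ℝ≥0∞) * L ^ p := by
    refine hintle.trans ?_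
    calc ∑ j ∈ Finset.range m, ∫⁻ w, ((‖a j w‖₊ : ℝ≥0∞)) ^ p ∂μ
        ≤ ∑ _j ∈ Finset.range m, L ^ p :=
          Finset.sum_le_sum fun j _ => by
            rw [hjeq j]; exact ENNReal.rpow_le_rpow (hL j) hp.le
      _ = (m : ℝ≥0∞) * L ^ p := by rw [Finset.sum_const, Finset.card_range, nsmul_eq_mul]
  rw [eLpNorm_eq_lintegral_rpow_enorm_toReal hP0 hPt, hPr]
  calc (∫⁻ w, ((‖∑ j ∈ Finset.range m, a j w‖₊ : ℝ≥0∞)) ^ p ∂μ) ^ (1 / p)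
      ≤ ((m : ℝ≥0∞) * L ^ p) ^ ((1 : ℝ) / p) := ENNReal.rpow_le_rpow hsum_le (by positivity)
    _ = (m : ℝ≥0∞) ^ ((1 : ℝ) / p) * L := by
        rw [ENNReal.mul_rpow_of_nonneg _ _ (by positivity), one_div,
          ENNReal.rpow_rpow_inv hp.ne']

lemma trunc_exists (n : ℕ) (p α : ℝ) (hp : 1 < p) (hα : 0 < α) [Fact (1 ≤ pe p)]
    (μ : Measure (Cn n)) (hμ : μ = gaussian n (p * α / 2))
    (C : Cn n → (Lp ℂ (pe p) μ →L[ℂ] Lp ℂ (pe p) μ))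
    (hC : IsFockShiftFamily n α (pe p) μ C)
    (hCiso : ∀ (z : Cn n) (u : Lp ℂ (pe p) μ), ‖C z u‖ = ‖u‖)
    (hCinv : ∀ z : Cn n, (C z).comp (C (-z)) = ContinuousLinearMap.id ℂ (Lp ℂ (pe p) μ))
    (g0 : Lp ℂ (pe p) μ) (z : Cn n) (R : ℝ) :
    ∃ u : Lp ℂ (pe p) μ,
      (⇑u =ᵐ[μ] (Metric.ball (-z) R).indicator ⇑(C (-z) g0)) ∧
      ‖u‖ ≤ ‖g0‖ ∧
      ‖C (-z) g0 - u‖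
        = (eLpNorm ((Metric.ball (0 : Cn n) R)ᶜ.indicator ⇑g0) (pe p) μ).toReal := by
  subst hμ
  have hp0 : (0 : ℝ) < p := lt_trans one_pos hp
  have hβ : 0 < p * α / 2 := by positivity
  set fz := C (-z) g0 with hfz
  have hmem : MemLp ((Metric.ball (-z) R).indicator ⇑fz) (pe p) (gaussian n (p * α / 2)) :=
    (Lp.memLp fz).indicator measurableSet_ball
  set u0 : Lp ℂ (pe p) (gaussian n (p * α / 2)) := hmem.toLp _ with hu0
  have hcoe : ⇑u0 =ᵐ[gaussian n (p * α / 2)] (Metric.ball (-z) R).indicator ⇑fz :=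
    hmem.coeFn_toLp
  refine ⟨u0, hcoe, ?_, ?_⟩
  · have h1 : ‖u0‖ = (eLpNorm ((Metric.ball (-z) R).indicator ⇑fz) (pe p)
        (gaussian n (p * α / 2))).toReal := by
      rw [Lp.norm_def, eLpNorm_congr_ae hcoe]
    rw [h1, ← hCiso (-z) g0, Lp.norm_def]
    exact ENNReal.toReal_mono (Lp.eLpNorm_ne_top _) (eLpNorm_indicator_le _)
  · have hid : C z fz = g0 := by
      have h := ContinuousLinearMap.ext_iff.mp (hCinv z) g0
      simpa using h
    have h1 : ‖fz - u0‖ = ‖C z (fz - u0)‖ := (hCiso z _).symm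
    rw [h1, map_sub, hid, Lp.norm_def]
    congr 1
    apply eLpNorm_congr_ae
    have htr := ae_translate (f := ⇑u0) (h := (Metric.ball (-z) R).indicator ⇑fz) hβ z hcoe
    have hg0f := hC z fz
    rw [hid] at hg0f
    filter_upwards [Lp.coeFn_sub g0 (C z u0), hC z u0, htr, hg0f] with w hw1 hw2 hw3 hw4
    rw [hw1]
    simp only [Pi.sub_apply]
    rw [hw2, hw3]
    have hmemball : w - z ∈ Metric.ball (-z) R ↔ w ∈ Metric.ball (0 : Cn n) R := by
      rw [Metric.mem_ball, Metric.mem_ball, dist_eq_norm, dist_eq_norm, sub_neg_eq_add,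
        sub_add_cancel, sub_zero]
    by_cases hwb : w ∈ Metric.ball (0 : Cn n) R
    · rw [Set.indicator_of_mem (hmemball.mpr hwb),
        Set.indicator_of_notMem (by simpa using hwb)]
      rw [← hw4]
      exact sub_self _
    · rw [Set.indicator_of_notMem (fun hc => hwb (hmemball.mp hc)),
        Set.indicator_of_mem (by simpa using hwb)]
      rw [zero_mul, sub_zero]

end Stmt0Aux

set_option maxHeartbeats 4000000 in
set_option synthInstance.maxHeartbeats 1000000 in
/-- If `H : F^p_α → L^p_α` is a compact operator, then for every `g ∈ F^p_α`
one has `‖C_z H C_{-z} g‖ → 0` as `|z| → ∞`. -/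
theorem stmt0 (n : ℕ) (hn : 1 ≤ n) (p α : ℝ) (hp : 1 < p) (hα : 0 < α)
    [Fact (1 ≤ pe p)]
    (μ : Measure (Cn n)) (hμ : μ = gaussian n (p * α / 2))
    (C : Cn n → (Lp ℂ (pe p) μ →L[ℂ] Lp ℂ (pe p) μ))
    (hC : IsFockShiftFamily n α (pe p) μ C)
    (hCiso : ∀ (z : Cn n) (u : Lp ℂ (pe p) μ), ‖C z u‖ = ‖u‖)
    (hCinv : ∀ z : Cn n, (C z).comp (C (-z)) = ContinuousLinearMap.id ℂ (Lp ℂ (pe p) μ))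
    (hCF : ∀ z : Cn n, ∀ u : Lp ℂ (pe p) μ,
      u ∈ fockSubmodule n (pe p) μ → C z u ∈ fockSubmodule n (pe p) μ)
    (H : ↥(fockSubmodule n (pe p) μ) →L[ℂ] Lp ℂ (pe p) μ)
    (hH : IsCompactOperator (⇑H))
    (g : ↥(fockSubmodule n (pe p) μ)) :
    Tendsto (fun z : Cn n => ‖C z (H ⟨C (-z) ↑g, hCF (-z) ↑g g.2⟩)‖)
      (Bornology.cobounded (Cn n)) (𝓝 0) := by
  classical
  simp only [hCiso]
  set x : Cn n → ↥(fockSubmodule n (pe p) μ) :=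
    fun z => ⟨C (-z) ↑g, hCF (-z) ↑g g.2⟩ with hxdef
  show Tendsto (fun z : Cn n => ‖H (x z)‖) (Bornology.cobounded (Cn n)) (𝓝 0)
  by_contra hcon
  have hcon' : ¬ ∀ ε > (0:ℝ), ∀ᶠ z in Bornology.cobounded (Cn n), dist ‖H (x z)‖ 0 < ε := by
    intro hc
    exact hcon (Metric.tendsto_nhds.mpr hc)
  push_neg at hcon'
  obtain ⟨ε, hε, hfr0⟩ := hcon'
  have hfr : ∃ᶠ z in Bornology.cobounded (Cn n), ε ≤ ‖H (x z)‖ := by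
    refine hfr0.mono fun z hz => ?_
    rw [Real.dist_eq, sub_zero, _root_.abs_of_nonneg (norm_nonneg _)] at hz
    exact hz
  have hp0 : (0:ℝ) < p := lt_trans one_pos hp
  have hxnorm : ∀ z, ‖x z‖ = ‖g‖ := fun z => by
    calc ‖x z‖ = ‖(x z : Lp ℂ (pe p) μ)‖ := (Submodule.norm_coe _).symm
      _ = ‖(g : Lp ℂ (pe p) μ)‖ := hCiso (-z) ↑g
      _ = ‖g‖ := Submodule.norm_coe _
  -- choose the truncation radius R
  obtain ⟨R, hR, htailR⟩ := Stmt0Aux.tail_small hp0 μ (↑g : Lp ℂ (pe p) μ)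
    (τ := ENNReal.ofReal (ε / (8 * (‖H‖ + 1))))
    (by simp only [ne_eq, ENNReal.ofReal_eq_zero, not_le]; positivity) ENNReal.ofReal_ne_top
  set tailval : ℝ :=
    (eLpNorm ((Metric.ball (0:Cn n) R)ᶜ.indicator ⇑(↑g : Lp ℂ (pe p) μ)) (pe p) μ).toReal
    with htvdef
  have htail : tailval ≤ ε / (8 * (‖H‖ + 1)) :=
    ENNReal.toReal_le_of_le_ofReal (by positivity) htailR
  have htail0 : 0 ≤ tailval := ENNReal.toReal_nonneg
  -- choose the number of summands m
  have h1p : (1:ℝ)/p - 1 < 0 := by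
    have h2 : 1/p < 1 := by
      rw [div_lt_one hp0]
      exact hp
    linarith
  have hmt : Tendsto (fun m : ℕ => ‖H‖ * ‖g‖ * (m:ℝ) ^ ((1:ℝ)/p - 1)) Filter.atTop (𝓝 0) := by
    have h0 : Tendsto (fun t : ℝ => t ^ ((1:ℝ)/p - 1)) Filter.atTop (𝓝 0) := by
      have h := tendsto_rpow_neg_atTop (y := 1 - 1/p) (by linarith)
      simpa [neg_sub] using h
    have h1 := h0.comp (tendsto_natCast_atTop_atTop (R := ℝ))
    have h2 := h1.const_mul (‖H‖ * ‖g‖)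
    simpa [Function.comp, mul_zero] using h2
  obtain ⟨m, hm1, hm2⟩ := ((hmt.eventually (gt_mem_nhds (by positivity : (0:ℝ) < ε/8))).and
    (Filter.eventually_ge_atTop 1)).exists
  have hmpos : (0:ℝ) < (m:ℝ) := by exact_mod_cast Nat.cast_pos.mpr hm2
  -- a sequence of widely separated shifts where the norms stay ≥ ε
  have hsel : ∀ c : ℝ, ∃ z : Cn n, c < ‖z‖ ∧ ε ≤ ‖H (x z)‖ := by
    intro c
    have hev : ∀ᶠ z : Cn n in Bornology.cobounded (Cn n), c < ‖z‖ :=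
      tendsto_norm_cobounded_atTop.eventually_gt_atTop c
    obtain ⟨z, hz1, hz2⟩ := (hfr.and_eventually hev).exists
    exact ⟨z, hz2, hz1⟩
  set seq : ℕ → Cn n :=
    fun k => Nat.rec (hsel 0).choose (fun _ w => (hsel (‖w‖ + (2*R+1))).choose) k with hseqdef
  have hseqε : ∀ k, ε ≤ ‖H (x (seq k))‖ := by
    intro k
    cases k with
    | zero => exact (hsel 0).choose_spec.2
    | succ k => exact (hsel _).choose_spec.2
  have hgap : ∀ k, ‖seq k‖ + (2*R+1) < ‖seq (k+1)‖ := fun k => (hsel _).choose_spec.1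
  have hsep : ∀ i j, i < j → ‖seq i‖ + (2*R+1) ≤ ‖seq j‖ := by
    intro i j hij
    obtain ⟨d, rfl⟩ := Nat.exists_eq_add_of_lt hij
    clear hij
    induction d with
    | zero => exact (hgap i).le
    | succ d ih =>
      have h1 := hgap (i + d + 1)
      have h2 : i + (d+1) + 1 = (i + d + 1) + 1 := by omega
      rw [h2]
      have hnn : ‖seq (i + d + 1)‖ ≥ 0 := norm_nonneg _
      have hR0 : (0:ℝ) ≤ 2*R+1 := by linarith
      calc ‖seq i‖ + (2*R+1) ≤ ‖seq (i+d+1)‖ := ih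
        _ ≤ ‖seq (i+d+1+1)‖ := by linarith
  -- extract a norm-convergent subsequence of the images, using compactness
  obtain ⟨K, hK, hHK⟩ := hH
  obtain ⟨r, hr, hball⟩ := Metric.mem_nhds_iff.mp hHK
  set c : ℝ := r / (2 * (‖g‖ + 1)) with hcdef
  have hc0 : 0 < c := by positivity
  have hcC : ((c:ℂ)) ≠ 0 := Complex.ofReal_ne_zero.mpr hc0.ne'
  have hcball : ∀ k, H ((c:ℂ) • x (seq k)) ∈ K := by
    intro k
    apply hball
    rw [Metric.mem_ball, dist_zero_right, norm_smul]
    have hnc : ‖(c:ℂ)‖ = c := by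
      rw [Complex.norm_real]
      exact abs_of_pos hc0
    rw [hnc, hxnorm]
    have hg1 : (0:ℝ) < ‖g‖ + 1 := by positivity
    calc c * ‖g‖ ≤ c * (‖g‖ + 1) := by nlinarith
      _ = r / 2 := by
          rw [hcdef]
          field_simp
      _ < r := by linarith
  obtain ⟨y', hy'K, φ, hφ, hconv⟩ := hK.tendsto_subseq hcball
  set y : Lp ℂ (pe p) μ := (c:ℂ)⁻¹ • y' with hydef
  have hyconv : Tendsto (fun j => H (x (seq (φ j)))) Filter.atTop (𝓝 y) := by
    have hidk : ∀ k, H (x (seq k)) = (c:ℂ)⁻¹ • H ((c:ℂ) • x (seq k)) := by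
      intro k
      rw [ContinuousLinearMap.map_smul, smul_smul, inv_mul_cancel₀ hcC, one_smul]
    simp only [hidk]
    exact hconv.const_smul _
  have hynorm : ε ≤ ‖y‖ := ge_of_tendsto' hyconv.norm fun j => hseqε (φ j)
  obtain ⟨J, hJ⟩ := Metric.tendsto_atTop.mp hyconv (ε/4) (by positivity)
  set ζ : ℕ → Cn n := fun j => seq (φ (J + j)) with hζdef
  have hζε : ∀ j, ε ≤ ‖H (x (ζ j))‖ := fun j => hseqε _
  have hζy : ∀ j, ‖H (x (ζ j)) - y‖ ≤ ε/4 := fun j => by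
    have h := hJ (J + j) (Nat.le_add_right _ _)
    rw [dist_eq_norm] at h
    exact h.le
  have hζsep : ∀ i j, i < j → ‖ζ i‖ + (2*R+1) ≤ ‖ζ j‖ := fun i j hij =>
    hsep _ _ (hφ (by omega))
  -- disjointness of the balls around the -ζ j
  have hballs : ∀ i j, i ≠ j → ∀ w : Cn n,
      w ∈ Metric.ball (-(ζ i)) R → w ∈ Metric.ball (-(ζ j)) R → False := by
    have key : ∀ i j, i < j → ∀ w : Cn n,
        w ∈ Metric.ball (-(ζ i)) R → w ∈ Metric.ball (-(ζ j)) R → False := by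
      intro i j hij w hwi hwj
      have hwi' : dist w (-(ζ i)) < R := Metric.mem_ball.mp hwi
      have hwj' : dist w (-(ζ j)) < R := Metric.mem_ball.mp hwj
      have h1 : dist (-(ζ i)) (-(ζ j)) < 2*R := by
        calc dist (-(ζ i)) (-(ζ j)) ≤ dist (-(ζ i)) w + dist w (-(ζ j)) := dist_triangle _ _ _
          _ < R + R := by rw [dist_comm (-(ζ i)) w]; linarith
          _ = 2*R := by ring
      have h2 : ‖ζ j‖ - ‖ζ i‖ ≤ dist (-(ζ i)) (-(ζ j)) := by
        rw [dist_neg_neg, dist_eq_norm]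
        calc ‖ζ j‖ - ‖ζ i‖ ≤ ‖ζ j - ζ i‖ := norm_sub_norm_le _ _
          _ = ‖ζ i - ζ j‖ := norm_sub_rev _ _
      have h3 := hζsep i j hij
      linarith
    intro i j hne w hwi hwj
    rcases lt_or_gt_of_ne hne with h | h
    · exact key i j h w hwi hwj
    · exact key j i h w hwj hwi
  -- truncations
  set f0 : ℕ → Lp ℂ (pe p) μ := fun j => C (-(ζ j)) ↑g with hf0def
  have htr : ∀ j, ∃ u : Lp ℂ (pe p) μ,
      (⇑u =ᵐ[μ] (Metric.ball (-(ζ j)) R).indicator ⇑(f0 j)) ∧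
      ‖u‖ ≤ ‖(↑g : Lp ℂ (pe p) μ)‖ ∧ ‖f0 j - u‖ = tailval := fun j =>
    Stmt0Aux.trunc_exists n p α hp hα μ hμ C hC hCiso hCinv ↑g (ζ j) R
  choose u hu1 hu2 hu3 using htr
  -- the big sum
  set S : ↥(fockSubmodule n (pe p) μ) := ∑ j ∈ Finset.range m, x (ζ j) with hSdef
  have hHS : H S = ∑ j ∈ Finset.range m, H (x (ζ j)) := by
    rw [hSdef, map_sum]
  -- lower bound for ‖H S‖
  have hlow : (m:ℝ) * (3*ε/4) ≤ ‖H S‖ := by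
    have hsum_y : ∑ j ∈ Finset.range m, (H (x (ζ j)) - y)
        = H S - (Finset.range m).card • y := by
      rw [Finset.sum_sub_distrib, Finset.sum_const, hHS]
    have hmy : ((Finset.range m).card • y : Lp ℂ (pe p) μ) = (m:ℂ) • y := by
      rw [Finset.card_range]
      exact (Nat.cast_smul_eq_nsmul ℂ m y).symm
    have h1 : ((m:ℂ) • y : Lp ℂ (pe p) μ)
        = H S - ∑ j ∈ Finset.range m, (H (x (ζ j)) - y) := by
      rw [hsum_y, hmy, sub_sub_cancel]
    have h2 : ‖((m:ℂ) • y : Lp ℂ (pe p) μ)‖ = (m:ℝ) * ‖y‖ := by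
      rw [norm_smul, Complex.norm_natCast]
    have h3 : ‖∑ j ∈ Finset.range m, (H (x (ζ j)) - y)‖ ≤ (m:ℝ) * (ε/4) := by
      calc ‖∑ j ∈ Finset.range m, (H (x (ζ j)) - y)‖
          ≤ ∑ j ∈ Finset.range m, ‖H (x (ζ j)) - y‖ := norm_sum_le _ _
        _ ≤ ∑ _j ∈ Finset.range m, (ε/4) := Finset.sum_le_sum fun j _ => hζy j
        _ = (m:ℝ) * (ε/4) := by rw [Finset.sum_const, Finset.card_range, nsmul_eq_mul]
    have h4 : (m:ℝ) * ε ≤ (m:ℝ) * ‖y‖ := mul_le_mul_of_nonneg_left hynorm hmpos.le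
    have h5 : ‖((m:ℂ) • y : Lp ℂ (pe p) μ)‖
        ≤ ‖H S‖ + ‖∑ j ∈ Finset.range m, (H (x (ζ j)) - y)‖ := by
      rw [h1]
      exact norm_sub_le _ _
    rw [h2] at h5
    linarith
  -- upper bound for ‖H S‖
  have hScoe : ((S : Lp ℂ (pe p) μ)) = ∑ j ∈ Finset.range m, f0 j := by
    rw [hSdef]
    exact Submodule.coe_sum _ _ _
  have hAnorm : ‖∑ j ∈ Finset.range m, u j‖ ≤ (m:ℝ) ^ ((1:ℝ)/p) * ‖g‖ := by
    have hcoe2 : ⇑(∑ j ∈ Finset.range m, u j) =ᵐ[μ]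
        fun w => ∑ j ∈ Finset.range m,
          ((Metric.ball (-(ζ j)) R).indicator ⇑(f0 j)) w := by
      refine (Stmt0Aux.lp_coeFn_sum m u).trans ?_
      have hall : ∀ᵐ w ∂μ, ∀ j : ℕ, (u j : Cn n → ℂ) w
          = ((Metric.ball (-(ζ j)) R).indicator ⇑(f0 j)) w := ae_all_iff.mpr fun j => hu1 j
      filter_upwards [hall] with w hw
      exact Finset.sum_congr rfl fun j _ => hw j
    have hL : ∀ j, eLpNorm ((Metric.ball (-(ζ j)) R).indicator ⇑(f0 j)) (pe p) μ
        ≤ ENNReal.ofReal ‖g‖ := by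
      intro j
      calc eLpNorm ((Metric.ball (-(ζ j)) R).indicator ⇑(f0 j)) (pe p) μ
          ≤ eLpNorm ⇑(f0 j) (pe p) μ := eLpNorm_indicator_le _
        _ = ENNReal.ofReal ‖f0 j‖ := by
            rw [Lp.norm_def, ENNReal.ofReal_toReal (Lp.eLpNorm_ne_top _)]
        _ = ENNReal.ofReal ‖g‖ := by
            rw [hf0def]
            simp only []
            rw [hCiso (-(ζ j)) ↑g, Submodule.norm_coe]
    have hdsum := Stmt0Aux.disj_sum hp0 m
      (fun j => (Metric.ball (-(ζ j)) R).indicator ⇑(f0 j))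
      (fun j => Metric.ball (-(ζ j)) R)
      (fun j => (Lp.aestronglyMeasurable (f0 j)).indicator measurableSet_ball)
      (fun j w hne => by
        by_contra hnot
        exact hne (Set.indicator_of_notMem hnot _))
      hballs hL
    rw [Lp.norm_def, eLpNorm_congr_ae hcoe2]
    have hne : ((m : ℝ≥0∞) ^ ((1:ℝ)/p) * ENNReal.ofReal ‖g‖) ≠ ∞ :=
      ENNReal.mul_ne_top (ENNReal.rpow_ne_top_of_nonneg (by positivity) (ENNReal.natCast_ne_top m))
        ENNReal.ofReal_ne_top
    calc (eLpNorm (fun w => ∑ j ∈ Finset.range m,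
            ((Metric.ball (-(ζ j)) R).indicator ⇑(f0 j)) w) (pe p) μ).toReal
        ≤ ((m : ℝ≥0∞) ^ ((1:ℝ)/p) * ENNReal.ofReal ‖g‖).toReal :=
          ENNReal.toReal_mono hne hdsum
      _ = (m:ℝ) ^ ((1:ℝ)/p) * ‖g‖ := by
          rw [ENNReal.toReal_mul, ← ENNReal.toReal_rpow, ENNReal.toReal_natCast,
            ENNReal.toReal_ofReal (norm_nonneg _)]
  have hSnorm : ‖S‖ ≤ (m:ℝ) ^ ((1:ℝ)/p) * ‖g‖ + (m:ℝ) * tailval := by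
    have hsplit : ∑ j ∈ Finset.range m, f0 j
        = (∑ j ∈ Finset.range m, u j) + ∑ j ∈ Finset.range m, (f0 j - u j) := by
      rw [← Finset.sum_add_distrib]
      exact Finset.sum_congr rfl fun j _ => by abel
    have hBnorm : ‖∑ j ∈ Finset.range m, (f0 j - u j)‖ ≤ (m:ℝ) * tailval := by
      calc ‖∑ j ∈ Finset.range m, (f0 j - u j)‖
          ≤ ∑ j ∈ Finset.range m, ‖f0 j - u j‖ := norm_sum_le _ _
        _ = ∑ _j ∈ Finset.range m, tailval := Finset.sum_congr rfl fun j _ => hu3 j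
        _ = (m:ℝ) * tailval := by rw [Finset.sum_const, Finset.card_range, nsmul_eq_mul]
    calc ‖S‖ = ‖(S : Lp ℂ (pe p) μ)‖ := (Submodule.norm_coe _).symm
      _ = ‖∑ j ∈ Finset.range m, f0 j‖ := by rw [hScoe]
      _ = ‖(∑ j ∈ Finset.range m, u j) + ∑ j ∈ Finset.range m, (f0 j - u j)‖ := by
          rw [← hsplit]
      _ ≤ ‖∑ j ∈ Finset.range m, u j‖ + ‖∑ j ∈ Finset.range m, (f0 j - u j)‖ :=
          norm_add_le _ _
      _ ≤ (m:ℝ) ^ ((1:ℝ)/p) * ‖g‖ + (m:ℝ) * tailval := add_le_add hAnorm hBnorm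
  have hupper : ‖H S‖ ≤ ‖H‖ * ((m:ℝ) ^ ((1:ℝ)/p) * ‖g‖ + (m:ℝ) * tailval) := by
    calc ‖H S‖ ≤ ‖H‖ * ‖S‖ := H.le_opNorm S
      _ ≤ ‖H‖ * ((m:ℝ) ^ ((1:ℝ)/p) * ‖g‖ + (m:ℝ) * tailval) :=
          mul_le_mul_of_nonneg_left hSnorm (norm_nonneg H)
  -- final numeric contradiction
  have hfin1 : ‖H‖ * ((m:ℝ) ^ ((1:ℝ)/p) * ‖g‖) ≤ (ε/8) * m := by
    have hrw : (m:ℝ) ^ ((1:ℝ)/p) = (m:ℝ) ^ ((1:ℝ)/p - 1) * (m:ℝ) := by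
      rw [Real.rpow_sub hmpos, Real.rpow_one, div_mul_cancel₀ _ hmpos.ne']
    calc ‖H‖ * ((m:ℝ) ^ ((1:ℝ)/p) * ‖g‖)
        = (‖H‖ * ‖g‖ * (m:ℝ) ^ ((1:ℝ)/p - 1)) * (m:ℝ) := by rw [hrw]; ring
      _ ≤ (ε/8) * m := mul_le_mul_of_nonneg_right hm1.le hmpos.le
  have hfin2 : ‖H‖ * ((m:ℝ) * tailval) ≤ (ε/8) * m := by
    have hHn : (0:ℝ) ≤ ‖H‖ := norm_nonneg H
    have h1 : ‖H‖ * tailval ≤ ε/8 := by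
      have hq : ‖H‖ / (‖H‖ + 1) ≤ 1 := by
        rw [div_le_one (by positivity)]
        linarith
      calc ‖H‖ * tailval ≤ ‖H‖ * (ε / (8 * (‖H‖ + 1))) :=
            mul_le_mul_of_nonneg_left htail hHn
        _ = (ε/8) * (‖H‖ / (‖H‖ + 1)) := by
            field_simp
        _ ≤ (ε/8) * 1 := mul_le_mul_of_nonneg_left hq (by positivity)
        _ = ε/8 := mul_one _
    calc ‖H‖ * ((m:ℝ) * tailval) = (‖H‖ * tailval) * (m:ℝ) := by ring
      _ ≤ (ε/8) * m := mul_le_mul_of_nonneg_right h1 hmpos.le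
  have hcontr : (m:ℝ) * (3*ε/4) ≤ (m:ℝ) * (ε/4) := by
    calc (m:ℝ) * (3*ε/4) ≤ ‖H S‖ := hlow
      _ ≤ ‖H‖ * ((m:ℝ) ^ ((1:ℝ)/p) * ‖g‖) + ‖H‖ * ((m:ℝ) * tailval) := by
          rw [← mul_add]; exact hupper
      _ ≤ (ε/8) * m + (ε/8) * m := add_le_add hfin1 hfin2
      _ = (m:ℝ) * (ε/4) := by ring
  have := le_of_mul_le_mul_left (by linarith : (m:ℝ) * (3*ε/4) ≤ (m:ℝ) * (ε/4)) hmpos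
  linarith
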